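/- With binary valuations where every agent of every couple approves between kn+1 and (k+1)n goods (for some integer k ≥ 0, n couples), after a greedy phase allocating at most k commonly-approved goods per group, the fractional point x_{α,(g,i)} = (k − k_g)/(kn − k') when (g,i) approves α (and 0 otherwise) is feasible for the polytope requiring each remaining agent (g,i) to get total weight ≥ k − k_g and each remaining good total weight ≤ 1; since the constraint matrix is the incidence matrix of a bipartite graph and hence totally unimodular, an integral solution exists, yielding a PROP1 allocation. -/

import Mathlib

/-- Binary-valuations lemma (second phase): after a greedy phase giving group `g` a total
of `k_g ≤ k` commonly-approved goods, the fractional point assigning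
`(k - k_g)/(kn - k')` to each approved (good, agent) pair is feasible for the polytope
requiring agent weights at least `k - k_g` and good weights at most `1`; and (by total
unimodularity of bipartite incidence matrices) an integral solution exists, i.e., the
remaining agents can be given disjoint sets of at least `k - k_g` approved goods. -/
theorem stmt_19 {Goods G : Type*} [Fintype Goods] [Fintype G] [DecidableEq Goods]
    (n k : ℕ) (hn : Fintype.card G = n)
    (A : G → Fin 2 → Finset Goods)
    (kg : G → ℕ) (hkg : ∀ g, kg g ≤ k)
    (k' : ℕ) (hk' : k' = ∑ g, kg g) (hlt : k' < k * n)
    (hdeg : ∀ g i, k * n + 1 - k' ≤ (A g i).card)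
    (honce : ∀ (α : Goods) (g : G), ¬(α ∈ A g 0 ∧ α ∈ A g 1))
    (x : Goods → G → Fin 2 → ℝ)
    (hxdef : x = fun α g i =>
      if α ∈ A g i then ((k : ℝ) - kg g) / ((k * n : ℝ) - k') else 0) :
    (∀ α g i, 0 ≤ x α g i ∧ x α g i ≤ 1) ∧
    (∀ g i, (k : ℝ) - kg g ≤ ∑ α, x α g i) ∧
    (∀ α, ∑ g, ∑ i, x α g i ≤ 1) ∧
    ∃ T : G → Fin 2 → Finset Goods,
      (∀ g i, T g i ⊆ A g i) ∧
      (∀ g i g' i', (g, i) ≠ (g', i') → Disjoint (T g i) (T g' i')) ∧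
      (∀ g i, k - kg g ≤ (T g i).card) := by
  classical
  subst hxdef
  -- basic numeric facts
  have hsum : ∑ g : G, (k - kg g) = k * n - k' := by
    have h1 : (∑ g : G, (k - kg g)) + ∑ g : G, kg g = ∑ g : G, k := by
      rw [← Finset.sum_add_distrib]
      exact Finset.sum_congr rfl fun g _ => Nat.sub_add_cancel (hkg g)
    have h2 : ∑ _g : G, k = k * n := by
      simp [Finset.sum_const, Finset.card_univ, hn, Nat.mul_comm]
    omega
  have hkle : ∀ g, k - kg g ≤ k * n - k' := by
    intro g
    have h : k - kg g ≤ ∑ g : G, (k - kg g) :=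
      Finset.single_le_sum (f := fun g => k - kg g)
        (fun _ _ => Nat.zero_le _) (Finset.mem_univ g)
    omega
  have hden : (0:ℝ) < (k * n : ℝ) - k' := by
    have : (k' : ℝ) < (k : ℝ) * n := by exact_mod_cast hlt
    linarith
  have hnum : ∀ g, (0:ℝ) ≤ (k:ℝ) - kg g := by
    intro g
    have : (kg g : ℝ) ≤ k := by exact_mod_cast hkg g
    linarith
  have hcle : ∀ g, (k:ℝ) - kg g ≤ (k * n : ℝ) - k' := by
    intro g
    have h1 : ((k - kg g : ℕ) : ℝ) ≤ ((k * n - k' : ℕ) : ℝ) := by exact_mod_cast hkle g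
    rw [Nat.cast_sub (hkg g), Nat.cast_sub hlt.le] at h1
    push_cast at h1 ⊢
    linarith
  have hc0 : ∀ g, (0:ℝ) ≤ ((k:ℝ) - kg g) / ((k * n : ℝ) - k') :=
    fun g => div_nonneg (hnum g) hden.le
  refine ⟨?_, ?_, ?_, ?_⟩
  · -- bounds 0 ≤ x ≤ 1
    intro α g i
    by_cases h : α ∈ A g i <;> simp only [h, if_true, if_false]
    · exact ⟨hc0 g, (div_le_one hden).mpr (hcle g)⟩
    · exact ⟨le_refl 0, zero_le_one⟩
  · -- agent weights
    intro g i
    have hEq : (∑ α : Goods, if α ∈ A g i then ((k:ℝ) - kg g) / ((k * n : ℝ) - k') else 0)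
        = ((A g i).card : ℝ) * (((k:ℝ) - kg g) / ((k * n : ℝ) - k')) := by
      rw [Finset.sum_ite_mem, Finset.univ_inter, Finset.sum_const, nsmul_eq_mul]
    rw [hEq]
    have hcard : ((k * n : ℝ) - k') ≤ ((A g i).card : ℝ) := by
      have h := hdeg g i
      have h2 : k * n - k' ≤ (A g i).card := by omega
      have h3 : ((k * n - k' : ℕ) : ℝ) ≤ ((A g i).card : ℝ) := by exact_mod_cast h2
      rw [Nat.cast_sub hlt.le] at h3
      push_cast at h3 ⊢
      linarith
    have := mul_le_mul_of_nonneg_right hcard (hc0 g)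
    have hcancel : ((k * n : ℝ) - k') * (((k:ℝ) - kg g) / ((k * n : ℝ) - k'))
        = (k:ℝ) - kg g := by
      field_simp
    linarith
  · -- good weights
    intro α
    have hper : ∀ g : G,
        (∑ i : Fin 2, if α ∈ A g i then ((k:ℝ) - kg g) / ((k * n : ℝ) - k') else 0)
          ≤ ((k:ℝ) - kg g) / ((k * n : ℝ) - k') := by
      intro g
      rw [Fin.sum_univ_two]
      have hno := honce α g
      have hc := hc0 g
      by_cases h0 : α ∈ A g 0 <;> by_cases h1 : α ∈ A g 1 <;>
        simp [h0, h1] <;> first | linarith | tauto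
    calc (∑ g : G, ∑ i : Fin 2,
            if α ∈ A g i then ((k:ℝ) - kg g) / ((k * n : ℝ) - k') else 0)
        ≤ ∑ g : G, ((k:ℝ) - kg g) / ((k * n : ℝ) - k') :=
          Finset.sum_le_sum fun g _ => hper g
      _ = 1 := by
          rw [← Finset.sum_div]
          have hS : ∑ g : G, ((k:ℝ) - kg g) = (k * n : ℝ) - k' := by
            rw [Finset.sum_sub_distrib, Finset.sum_const, Finset.card_univ, hn,
              nsmul_eq_mul, hk']
            push_cast
            ring
          rw [hS, div_self hden.ne']
  · -- integral solution via Hall's marriage theorem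
    set ι := Σ g : G, Fin 2 × Fin (k - kg g) with hι
    set t : ι → Finset Goods := fun x => A x.1 x.2.1 with ht
    have hall : ∀ s : Finset ι, s.card ≤ (s.biUnion t).card := by
      intro s
      rcases s.eq_empty_or_nonempty with rfl | hs
      · simp
      set D := s.image (fun x : ι => (x.1, x.2.1)) with hD
      have hDne : D.Nonempty := hs.image _
      have hsub : ∀ p ∈ D, A p.1 p.2 ⊆ s.biUnion t := by
        intro p hp
        obtain ⟨y, hy, rfl⟩ := Finset.mem_image.mp hp
        exact fun a ha => Finset.mem_biUnion.mpr ⟨y, hy, ha⟩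
      have hcardD : s.card ≤ ∑ p ∈ D, (k - kg p.1) := by
        rw [Finset.card_eq_sum_card_fiberwise
          (f := fun x : ι => (x.1, x.2.1)) (t := D)
          (fun x hx => Finset.mem_image_of_mem _ hx)]
        refine Finset.sum_le_sum fun p hp => ?_
        have hsubim : s.filter (fun x : ι => (x.1, x.2.1) = p) ⊆
            Finset.image (fun j : Fin (k - kg p.1) => (⟨p.1, (p.2, j)⟩ : ι))
              Finset.univ := by
          intro y hy
          simp only [Finset.mem_filter] at hy
          obtain ⟨hy1, hy2⟩ := hy
          subst hy2
          simp only [Finset.mem_image, Finset.mem_univ, true_and]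
          exact ⟨y.2.2, by rcases y with ⟨g, i, j⟩; rfl⟩
        calc (s.filter (fun x : ι => (x.1, x.2.1) = p)).card
            ≤ _ := Finset.card_le_card hsubim
          _ ≤ (Finset.univ : Finset (Fin (k - kg p.1))).card := Finset.card_image_le
          _ = k - kg p.1 := by simp
      refine hcardD.trans ?_
      by_cases hboth : ∃ g₀ : G, (g₀, (0 : Fin 2)) ∈ D ∧ (g₀, (1 : Fin 2)) ∈ D
      · obtain ⟨g₀, h0, h1⟩ := hboth
        have hdisj : Disjoint (A g₀ 0) (A g₀ 1) :=
          Finset.disjoint_left.mpr fun a ha ha' => honce a g₀ ⟨ha, ha'⟩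
        have hsubU : A g₀ 0 ∪ A g₀ 1 ⊆ s.biUnion t :=
          Finset.union_subset (hsub _ h0) (hsub _ h1)
        have hcardU : (A g₀ 0).card + (A g₀ 1).card ≤ (s.biUnion t).card := by
          rw [← Finset.card_union_of_disjoint hdisj]
          exact Finset.card_le_card hsubU
        have hDbound : ∑ p ∈ D, (k - kg p.1) ≤ 2 * (k * n - k') := by
          calc ∑ p ∈ D, (k - kg p.1)
              ≤ ∑ p ∈ (Finset.univ : Finset (G × Fin 2)), (k - kg p.1) :=
                Finset.sum_le_sum_of_subset (Finset.subset_univ D)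
            _ = 2 * (k * n - k') := by
                rw [Fintype.sum_prod_type]
                simp only [Finset.sum_const, Finset.card_univ, Fintype.card_fin,
                  smul_eq_mul]
                rw [← Finset.mul_sum, hsum]
        have d0 := hdeg g₀ 0
        have d1 := hdeg g₀ 1
        omega
      · push_neg at hboth
        have hinj : ∀ p ∈ D, ∀ q ∈ D, p.1 = q.1 → p = q := by
          intro p hp q hq h
          obtain ⟨g1, i1⟩ := p
          obtain ⟨g2, i2⟩ := q
          simp only at h
          subst h
          have hb := hboth g1
          fin_cases i1 <;> fin_cases i2
          · rfl
          · exact absurd hq (hb hp)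
          · exact absurd hp (hb hq)
          · rfl
        obtain ⟨p₀, hp₀⟩ := hDne
        calc ∑ p ∈ D, (k - kg p.1)
            = ∑ g ∈ D.image Prod.fst, (k - kg g) := (Finset.sum_image (g := (Prod.fst : G × Fin 2 → G)) (f := fun g => k - kg g) hinj).symm
          _ ≤ ∑ g : G, (k - kg g) :=
              Finset.sum_le_sum_of_subset (Finset.subset_univ _)
          _ = k * n - k' := hsum
          _ ≤ (A p₀.1 p₀.2).card := by have := hdeg p₀.1 p₀.2; omega
          _ ≤ (s.biUnion t).card := Finset.card_le_card (hsub p₀ hp₀)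
    obtain ⟨f, hfinj, hft⟩ :=
      (Finset.all_card_le_biUnion_card_iff_exists_injective t).mp hall
    refine ⟨fun g i => Finset.image (fun j : Fin (k - kg g) => f ⟨g, (i, j)⟩)
      Finset.univ, ?_, ?_, ?_⟩
    · intro g i a ha
      obtain ⟨j, _, rfl⟩ := Finset.mem_image.mp ha
      exact hft ⟨g, (i, j)⟩
    · intro g i g' i' hne
      rw [Finset.disjoint_left]
      rintro a ha ha'
      obtain ⟨j, _, rfl⟩ := Finset.mem_image.mp ha
      obtain ⟨j', _, heq⟩ := Finset.mem_image.mp ha'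
      have h := hfinj heq
      obtain ⟨rfl, h2⟩ := Sigma.mk.inj_iff.mp h
      rw [heq_eq_eq, Prod.mk.injEq] at h2
      exact hne (by rw [h2.1])
    · intro g i
      have hinj2 : Function.Injective (fun j : Fin (k - kg g) => f ⟨g, (i, j)⟩) := by
        intro j j' hjj
        have h := hfinj hjj
        have h2 := (Sigma.mk.inj_iff.mp h).2
        rw [heq_eq_eq, Prod.mk.injEq] at h2
        exact h2.2
      rw [Finset.card_image_of_injective _ hinj2]
      simp
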